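/- Let q, y, p ∈ ℝ^d, let ε ∈ (0,1) and D > 0, and set ℓ = ‖q − y‖. Suppose ℓ > 0, ‖q − p‖ ≥ ℓ, ‖p − y‖ ≤ D, and ⟨(q − y)/ℓ, p − y⟩ ≥ ε·D. Then the distance from q to the segment [y, p] (the convex hull of {y, p}) satisfies dist(q, [y,p]) ≤ √(1 − ε²)·ℓ ≤ (1 − ε²/2)·ℓ. -/

import Mathlib

open Metric
open scoped RealInnerProductSpace

theorem dist_to_segment_shrinks
    (d : ℕ) (q y p : EuclideanSpace ℝ (Fin d))
    (ε D : ℝ) (hε : ε ∈ Set.Ioo (0 : ℝ) 1) (hD : 0 < D)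
    (ℓ : ℝ) (hℓ : ℓ = ‖q - y‖) (hℓpos : 0 < ℓ)
    (hqp : ℓ ≤ ‖q - p‖) (hpy : ‖p - y‖ ≤ D)
    (hinner : ε * D ≤ ⟪ℓ⁻¹ • (q - y), p - y⟫) :
    Metric.infDist q (segment ℝ y p) ≤ Real.sqrt (1 - ε ^ 2) * ℓ ∧
      Real.sqrt (1 - ε ^ 2) * ℓ ≤ (1 - ε ^ 2 / 2) * ℓ := by
  obtain ⟨hε0, hε1⟩ := hε
  have hinner' : ε * D * ℓ ≤ ⟪q - y, p - y⟫ := by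
    rw [real_inner_smul_left] at hinner
    have h1 := mul_le_mul_of_nonneg_right hinner hℓpos.le
    have h2 : ℓ⁻¹ * ⟪q - y, p - y⟫ * ℓ = ⟪q - y, p - y⟫ := by
      field_simp
    linarith
  -- expand ‖q - p‖²
  have hexp : ‖q - p‖ ^ 2 = ℓ ^ 2 - 2 * ⟪q - y, p - y⟫ + ‖p - y‖ ^ 2 := by
    have : q - p = (q - y) - (p - y) := by abel
    rw [this, norm_sub_sq_real, hℓ]
  have hD2 : 2 * ε * ℓ ≤ D := by
    have h1 : ℓ ^ 2 ≤ ‖q - p‖ ^ 2 := pow_le_pow_left₀ hℓpos.le hqp 2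
    nlinarith [sq_nonneg (‖p - y‖), hpy, norm_nonneg (p - y)]
  set s : ℝ := ε * ℓ / D with hs
  have hs0 : 0 ≤ s := by positivity
  have hs1 : s ≤ 1 := by
    rw [div_le_one hD]; nlinarith
  have hz : y + s • (p - y) ∈ segment ℝ y p := by
    rw [segment_eq_image']
    exact ⟨s, ⟨hs0, hs1⟩, rfl⟩
  have hdist : Metric.infDist q (segment ℝ y p) ≤ ‖q - (y + s • (p - y))‖ := by
    have := Metric.infDist_le_dist_of_mem (x := q) hz
    rwa [dist_eq_norm] at this
  have key : ‖q - (y + s • (p - y))‖ ^ 2 ≤ (1 - ε ^ 2) * ℓ ^ 2 := by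
    have heq : q - (y + s • (p - y)) = (q - y) - s • (p - y) := by abel
    rw [heq, norm_sub_sq_real, real_inner_smul_right, norm_smul, ← hℓ]
    have hnn : ‖s • (p - y)‖ = s * ‖p - y‖ := by
      rw [norm_smul, Real.norm_of_nonneg hs0]
    have hsu : (s * ‖p - y‖) ^ 2 ≤ s ^ 2 * D ^ 2 := by
      have h := pow_le_pow_left₀ (norm_nonneg (p - y)) hpy 2
      calc (s * ‖p - y‖) ^ 2 = s ^ 2 * ‖p - y‖ ^ 2 := by ring
        _ ≤ s ^ 2 * D ^ 2 := mul_le_mul_of_nonneg_left h (sq_nonneg s)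
    have h2 : s * ⟪q - y, p - y⟫ ≥ s * (ε * D * ℓ) :=
      mul_le_mul_of_nonneg_left hinner' hs0
    have hsval : s * (ε * D * ℓ) = ε ^ 2 * ℓ ^ 2 := by
      rw [hs, div_mul_eq_mul_div, div_eq_iff hD.ne']; ring
    have hsD : s ^ 2 * D ^ 2 = ε ^ 2 * ℓ ^ 2 := by
      rw [hs, div_pow, div_mul_eq_mul_div, div_eq_iff (by positivity)]; ring
    rw [Real.norm_of_nonneg hs0]
    nlinarith
  have hnorm_le : ‖q - (y + s • (p - y))‖ ≤ Real.sqrt (1 - ε ^ 2) * ℓ := by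
    have h1 : Real.sqrt (‖q - (y + s • (p - y))‖ ^ 2) ≤ Real.sqrt ((1 - ε ^ 2) * ℓ ^ 2) :=
      Real.sqrt_le_sqrt key
    rwa [Real.sqrt_sq (norm_nonneg _), Real.sqrt_mul (by nlinarith) _,
      Real.sqrt_sq hℓpos.le] at h1
  refine ⟨hdist.trans hnorm_le, ?_⟩
  have hsq : Real.sqrt (1 - ε ^ 2) ≤ 1 - ε ^ 2 / 2 := by
    have h := Real.sq_sqrt (by nlinarith : (0:ℝ) ≤ 1 - ε ^ 2)
    nlinarith [Real.sqrt_nonneg (1 - ε ^ 2)]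
  exact mul_le_mul_of_nonneg_right hsq hℓpos.le
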